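/- The map F defined by F(η)(α) = code of the R_EF^α-equivalence class of A_η↾α (when cf(α) = μ, A_η↾α ⊨ T, and R_EF^α is an equivalence relation; 0 otherwise) is continuous from κ^κ to κ^κ: for every η and every α < κ there exists β < κ such that F is constant on the values below α on the basic open set [η↾β]. -/

import Mathlib

open Set Cardinal FirstOrder FirstOrder.Language

variable {L : Language}

/-- A set of pairs `g` is (the graph of) a partial isomorphism between the
structures `A` and `B`: it is functional, injective, and preserves all
relations in both directions. -/
def IsPartialIso (A B : L.Structure Ordinal.{0}) (g : Set (Ordinal.{0} × Ordinal.{0})) : Prop :=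
  (∀ p ∈ g, ∀ q ∈ g, p.1 = q.1 → p.2 = q.2) ∧
  (∀ p ∈ g, ∀ q ∈ g, p.2 = q.2 → p.1 = q.1) ∧
  ∀ (n : ℕ) (R : L.Relations n) (v : Fin n → Ordinal.{0} × Ordinal.{0}), (∀ i, v i ∈ g) →
    (A.RelMap R (fun i => (v i).1) ↔ B.RelMap R (fun i => (v i).2))

/-- The moves of player I up to round `n` (as a list). -/
def histMoves (β : ℕ → Ordinal.{0}) (n : ℕ) : List Ordinal.{0} := (List.range (n + 1)).map β

/-- Legality of I's move at round `n` in the (unrestricted) game `EF^κ_ω`: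
moves are ordinals `< κ` and the chosen sets `X_{β_n}` strictly increase. -/
def ILegalAt (κo : Ordinal.{0}) (X : Ordinal.{0} → Set Ordinal.{0}) (β : ℕ → Ordinal.{0}) (n : ℕ) : Prop :=
  β n < κo ∧ (n = 0 → (X (β 0)).Nonempty) ∧ ∀ m, n = m + 1 → X (β m) ⊂ X (β n)

/-- Legality of II's move at round `n` in the (unrestricted) game `EF^κ_ω`:
the chosen partial functions `f_{θ_n}` strictly increase and cover `X_{β_n}`. -/
def IILegalAt (κo : Ordinal.{0}) (X : Ordinal.{0} → Set Ordinal.{0})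
    (Fp : Ordinal.{0} → Set (Ordinal.{0} × Ordinal.{0})) (β θ : ℕ → Ordinal.{0}) (n : ℕ) : Prop :=
  θ n < κo ∧ X (β n) ⊆ Prod.fst '' Fp (θ n) ∧ X (β n) ⊆ Prod.snd '' Fp (θ n) ∧
    ∀ m, n = m + 1 → Fp (θ m) ⊂ Fp (θ n)

/-- `σ` is a winning strategy for player II in `EF^κ_ω(A,B)`. -/
def IsWinFull (A B : L.Structure Ordinal.{0}) (κo : Ordinal.{0}) (X : Ordinal.{0} → Set Ordinal.{0})
    (Fp : Ordinal.{0} → Set (Ordinal.{0} × Ordinal.{0})) (σ : List Ordinal.{0} → Ordinal.{0}) : Prop :=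
  ∀ β : ℕ → Ordinal.{0}, (∀ n, ILegalAt κo X β n) →
    (∀ n, IILegalAt κo X Fp β (fun k => σ (histMoves β k)) n) ∧
    IsPartialIso A B (⋃ n, Fp (σ (histMoves β n)))

/-- Legality of I's move at round `n` in the restricted game
`EF^κ_ω(A↾α, B↾α)` : everything lives below `α`. -/
def ILegalResAt (α : Ordinal.{0}) (X : Ordinal.{0} → Set Ordinal.{0}) (β : ℕ → Ordinal.{0}) (n : ℕ) : Prop :=
  β n < α ∧ X (β n) ⊆ Set.Iio α ∧ ∀ m, n = m + 1 → X (β m) ⊆ X (β n)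

/-- Legality of II's move at round `n` in the restricted game. -/
def IILegalResAt (α : Ordinal.{0}) (X : Ordinal.{0} → Set Ordinal.{0})
    (Fp : Ordinal.{0} → Set (Ordinal.{0} × Ordinal.{0})) (β θ : ℕ → Ordinal.{0}) (n : ℕ) : Prop :=
  θ n < α ∧ Fp (θ n) ⊆ (Set.Iio α) ×ˢ (Set.Iio α) ∧
    X (β n) ⊆ Prod.fst '' Fp (θ n) ∧ X (β n) ⊆ Prod.snd '' Fp (θ n) ∧
    ∀ m, n = m + 1 → Fp (θ m) ⊆ Fp (θ n)

/-- `σ` is a winning strategy for player II in the restricted game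
`EF^κ_ω(A↾α, B↾α)`. -/
def IsWinRes (A B : L.Structure Ordinal.{0}) (α : Ordinal.{0}) (X : Ordinal.{0} → Set Ordinal.{0})
    (Fp : Ordinal.{0} → Set (Ordinal.{0} × Ordinal.{0})) (σ : List Ordinal.{0} → Ordinal.{0}) : Prop :=
  ∀ β : ℕ → Ordinal.{0}, (∀ n, ILegalResAt α X β n) →
    (∀ n, IILegalResAt α X Fp β (fun k => σ (histMoves β k)) n) ∧
    IsPartialIso A B (⋃ n, Fp (σ (histMoves β n)))

/-- `C ⊆ κ` is club in `κ`. -/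
def IsClubIn (κ : Cardinal.{0}) (C : Set Ordinal.{0}) : Prop :=
  C ⊆ Set.Iio κ.ord ∧
  (∀ β < κ.ord, ∃ α ∈ C, β < α) ∧
  ∀ B ⊆ C, B.Nonempty → sSup B < κ.ord → sSup B ∈ C

/-- The enumerations `(X_γ)_{γ<κ}` of `P_κ(κ)` and `(f_γ)_{γ<κ}` of all partial
functions with small domain and range are adequate. -/
def GoodEnum (κ : Cardinal.{0}) (X : Ordinal.{0} → Set Ordinal.{0})
    (Fp : Ordinal.{0} → Set (Ordinal.{0} × Ordinal.{0})) : Prop :=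
  (∀ γ < κ.ord, X γ ⊆ Set.Iio κ.ord ∧ #(X γ) < Cardinal.lift.{1} κ) ∧
  (∀ s : Set Ordinal.{0}, s ⊆ Set.Iio κ.ord → #s < Cardinal.lift.{1} κ →
    ∃ γ < κ.ord, X γ = s) ∧
  (∀ γ < κ.ord, Fp γ ⊆ (Set.Iio κ.ord) ×ˢ (Set.Iio κ.ord) ∧ #(Fp γ) < Cardinal.lift.{1} κ ∧
    ∀ p ∈ Fp γ, ∀ q ∈ Fp γ, p.1 = q.1 → p.2 = q.2) ∧
  (∀ g : Set (Ordinal.{0} × Ordinal.{0}), g ⊆ (Set.Iio κ.ord) ×ˢ (Set.Iio κ.ord) →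
    #g < Cardinal.lift.{1} κ → (∀ p ∈ g, ∀ q ∈ g, p.1 = q.1 → p.2 = q.2) →
    ∃ γ < κ.ord, Fp γ = g)
/-- The countable relational vocabulary `{P_m : m < ω}`, where `P_m` has arity
`ar m`. -/
def Lang (ar : ℕ → ℕ) : Language :=
  { Functions := fun _ => Empty
    Relations := fun n => { m : ℕ // ar m = n } }

/-- The structure `A_η` with domain `κ` coded by `η ∈ κ^κ` via a fixed pairing
bijection `π : κ^{<ω} → κ` (Definition 2.1): a tuple `v` satisfies `P_m` iff
`η (π (m, v)) > 0`. -/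
def codedStruct (ar : ℕ → ℕ) (π : ℕ × List Ordinal.{0} → Ordinal.{0}) (η : Ordinal.{0} → Ordinal.{0}) :
    (Lang ar).Structure Ordinal.{0} where
  funMap := fun f _ => f.elim
  RelMap := fun {n} R v => 0 < η (π (R.1, List.ofFn v))

/-- The restriction `S↾α` of a relational structure with domain the ordinals to
the ordinals below `α`. -/
def restrictStruct {ar : ℕ → ℕ} (S : (Lang ar).Structure Ordinal.{0}) (α : Ordinal.{0}) :
    (Lang ar).Structure ↥(Set.Iio α) where
  funMap := fun f _ => f.elim
  RelMap := fun {n} R v => S.RelMap R (fun i => (v i : Ordinal.{0}))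

/-- `A_η↾α ⊨ T`. -/
def ModelsRes (ar : ℕ → ℕ) (π : ℕ × List Ordinal.{0} → Ordinal.{0}) (T : (Lang ar).Theory)
    (η : Ordinal.{0} → Ordinal.{0}) (α : Ordinal.{0}) : Prop :=
  @Theory.Model (Lang ar) ↥(Set.Iio α) (restrictStruct (codedStruct ar π η) α) T

/-- The relation `R_EF^α` on `κ^κ`. -/
def REF (ar : ℕ → ℕ) (π : ℕ × List Ordinal.{0} → Ordinal.{0}) (T : (Lang ar).Theory)
    (X : Ordinal.{0} → Set Ordinal.{0}) (Fp : Ordinal.{0} → Set (Ordinal.{0} × Ordinal.{0}))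
    (α : Ordinal.{0}) (η ξ : Ordinal.{0} → Ordinal.{0}) : Prop :=
  (¬ ModelsRes ar π T η α ∧ ¬ ModelsRes ar π T ξ α) ∨
  (ModelsRes ar π T η α ∧ ModelsRes ar π T ξ α ∧
    ∃ σ, IsWinRes (codedStruct ar π η) (codedStruct ar π ξ) α X Fp σ)

open scoped Classical in
/-- The reduction map `F` of Theorem 2.8: `F(η)(α)` is a code of the
`R_EF^α`-equivalence class of `A_η↾α` when `cf(α) = μ`, `A_η↾α ⊨ T`, and
`R_EF^α` is an equivalence relation, and `0` otherwise. -/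
noncomputable def Fcode (μ : Cardinal) (ar : ℕ → ℕ) (π : ℕ × List Ordinal.{0} → Ordinal.{0})
    (T : (Lang ar).Theory) (X : Ordinal.{0} → Set Ordinal.{0})
    (Fp : Ordinal.{0} → Set (Ordinal.{0} × Ordinal.{0}))
    (code : Ordinal.{0} → (Ordinal.{0} → Ordinal.{0}) → Ordinal.{0})
    (η : Ordinal.{0} → Ordinal.{0}) : Ordinal.{0} → Ordinal.{0} := fun α =>
  if Ordinal.cof α = μ ∧ ModelsRes ar π T η α ∧ Equivalence (REF ar π T X Fp α) then
    code α η
  else 0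


/-- Two relational structures (over `Lang ar`) with the same relation maps are equal. -/
theorem Lang.structure_ext {ar : ℕ → ℕ} {D : Type*} (S T : (Lang ar).Structure D)
    (h : ∀ (n : ℕ) (R : (Lang ar).Relations n) (v : Fin n → D),
      S.RelMap R v ↔ T.RelMap R v) : S = T := by
  cases S with | mk f r =>
  cases T with | mk f' r' =>
  congr 1
  · funext n fn v; exact fn.elim
  · funext n R v; exact propext (h n R v)

/-- The map `F` of Theorem 2.8 is continuous: for every `η` and `α < κ` there
is `β < κ` such that the values of `F` below `α` are constant on the basic
open set `[η↾β]`. -/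
theorem Fcode_continuous (κ μ : Cardinal.{0}) (hκ : κ.IsRegular) (hκω : ℵ₀ < κ)
    (hμ : μ.IsRegular) (hμκ : μ < κ)
    (ar : ℕ → ℕ) (π : ℕ × List Ordinal.{0} → Ordinal.{0})
    (hπlt : ∀ (m : ℕ) (l : List Ordinal.{0}), (∀ x ∈ l, x < κ.ord) → π (m, l) < κ.ord)
    (hπinj : Function.Injective π)
    (T : (Lang ar).Theory)
    (X : Ordinal.{0} → Set Ordinal.{0}) (Fp : Ordinal.{0} → Set (Ordinal.{0} × Ordinal.{0}))
    (code : Ordinal.{0} → (Ordinal.{0} → Ordinal.{0}) → Ordinal.{0})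
    -- the code depends only on the `R_EF^α`-equivalence class:
    (hcode : ∀ (α : Ordinal.{0}) (η ξ : Ordinal.{0} → Ordinal.{0}),
      REF ar π T X Fp α η ξ → code α η = code α ξ) :
    ∀ η : Ordinal.{0} → Ordinal.{0}, ∀ α < κ.ord, ∃ β < κ.ord,
      ∀ ξ : Ordinal.{0} → Ordinal.{0}, (∀ γ < β, ξ γ = η γ) →
        ∀ γ < α, Fcode μ ar π T X Fp code ξ γ = Fcode μ ar π T X Fp code η γ := by
  intro η α hα
  classical
  set e := (Ordinal.ToType.mk (o := α)) with he
  set f : ℕ × List α.ToType → Ordinal.{0} := fun i =>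
    π (i.1, i.2.map (fun t => (e.symm t : Ordinal.{0}))) + 1 with hf
  have hκord : Order.IsSuccLimit κ.ord := Cardinal.isSuccLimit_ord hκ.aleph0_le
  have hflt : ∀ i, f i < κ.ord := by
    intro i
    rw [hf]
    simp only []
    rw [Ordinal.add_one_eq_succ]
    apply hκord.succ_lt
    apply hπlt
    intro x hx
    simp only [List.mem_map] at hx
    obtain ⟨t, _, rfl⟩ := hx
    exact lt_trans (e.symm t).2 hα
  have hcard : #(ℕ × List α.ToType) < κ := by
    have h1 : #(List α.ToType) ≤ max ℵ₀ #(α.ToType) := Cardinal.mk_list_le_max _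
    have h2 : #(α.ToType) = α.card := Cardinal.mk_toType α
    have h3 : α.card < κ := (Cardinal.lt_ord.mp hα)
    have h4 : #(List α.ToType) < κ := lt_of_le_of_lt h1 (max_lt hκω (h2 ▸ h3))
    calc #(ℕ × List α.ToType) = ℵ₀ * #(List α.ToType) := by
          simp [Cardinal.mk_prod]
      _ < κ := Cardinal.mul_lt_of_lt hκ.aleph0_le hκω h4
  have hβlt : iSup f < κ.ord := Cardinal.iSup_lt_ord_of_isRegular hκ hcard hflt
  refine ⟨iSup f, hβlt, ?_⟩
  have hkey : ∀ (m : ℕ) (l : List Ordinal.{0}), (∀ x ∈ l, x < α) →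
      π (m, l) < iSup f := by
    intro m l hl
    have hfi : f (m, l.attach.map (fun x => e ⟨x.1, hl x.1 x.2⟩)) = π (m, l) + 1 := by
      rw [hf]
      have : (l.attach.map (fun x => e ⟨x.1, hl x.1 x.2⟩)).map
          (fun t => ((e.symm t : Set.Iio α) : Ordinal.{0})) = l := by
        simp [List.map_map, Function.comp_def]
      simp only [this]
    have hle : f (m, l.attach.map (fun x => e ⟨x.1, hl x.1 x.2⟩)) ≤ iSup f :=
      le_ciSup (Ordinal.bddAbove_range f) _
    rw [hfi, Ordinal.add_one_eq_succ] at hle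
    exact lt_of_lt_of_le (Order.lt_succ _) hle
  intro ξ hξ γ hγ
  -- agreement of relation maps below `α`
  have hag : ∀ (n : ℕ) (R : (Lang ar).Relations n) (w : Fin n → Ordinal.{0}),
      (∀ i, w i < α) →
      ((codedStruct ar π ξ).RelMap R w ↔ (codedStruct ar π η).RelMap R w) := by
    intro n R w hw
    show 0 < ξ (π (R.1, List.ofFn w)) ↔ 0 < η (π (R.1, List.ofFn w))
    rw [hξ _ (hkey R.1 (List.ofFn w) (by
      intro x hx
      obtain ⟨i, rfl⟩ := List.mem_ofFn.mp hx
      exact hw i))]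
  -- equality of restricted structures
  have hres : restrictStruct (codedStruct ar π ξ) γ = restrictStruct (codedStruct ar π η) γ := by
    apply Lang.structure_ext
    intro n R v
    exact hag n R (fun i => (v i : Ordinal.{0})) (fun i => lt_trans (v i).2 hγ)
  have hMiff : ModelsRes ar π T ξ γ ↔ ModelsRes ar π T η γ := by
    unfold ModelsRes
    rw [hres]
  -- transfer of the winning strategy
  have hREF : (Ordinal.cof γ = μ ∧ ModelsRes ar π T η γ ∧
      Equivalence (REF ar π T X Fp γ)) → REF ar π T X Fp γ ξ η := by
    rintro ⟨_, hM, hE⟩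
    rcases hE.refl η with ⟨h1, _⟩ | ⟨_, _, σ, hσ⟩
    · exact absurd hM h1
    refine Or.inr ⟨hMiff.mpr hM, hM, σ, ?_⟩
    intro βs hβs
    obtain ⟨hII, hiso⟩ := hσ βs hβs
    refine ⟨hII, hiso.1, hiso.2.1, ?_⟩
    intro n R v hv
    have hlt : ∀ i, ((v i).1 : Ordinal.{0}) < γ := by
      intro i
      obtain ⟨k, hk⟩ := Set.mem_iUnion.mp (hv i)
      exact ((hII k).2.1 hk).1
    exact ((hag n R (fun i => (v i).1) (fun i => lt_trans (hlt i) hγ)).trans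
      (hiso.2.2 n R v hv))
  by_cases hcond : Ordinal.cof γ = μ ∧ ModelsRes ar π T η γ ∧
      Equivalence (REF ar π T X Fp γ)
  · have hcondξ : Ordinal.cof γ = μ ∧ ModelsRes ar π T ξ γ ∧
        Equivalence (REF ar π T X Fp γ) := ⟨hcond.1, hMiff.mpr hcond.2.1, hcond.2.2⟩
    rw [Fcode, Fcode, if_pos hcondξ, if_pos hcond]
    exact hcode γ ξ η (hREF hcond)
  · have hcondξ : ¬ (Ordinal.cof γ = μ ∧ ModelsRes ar π T ξ γ ∧
        Equivalence (REF ar π T X Fp γ)) :=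
      fun h => hcond ⟨h.1, hMiff.mp h.2.1, h.2.2⟩
    rw [Fcode, Fcode, if_neg hcondξ, if_neg hcond]
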